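/- The entire function f(z) = e^{−z} + z is injective on the open strip S = { z ∈ ℂ : 0 < Im z < 2π }, and its image f(S) equals ℂ \ ( { w ∈ ℂ : Im w = 2π and Re w ≥ 1 } ∪ { w ∈ ℂ : Im w = 0 and Re w ≥ 1 } ). In particular f is a conformal mapping of S onto this slit plane. -/

import Mathlib

open Complex Set

namespace ExpNegAddId

open Real Filter Topology

/-! ### Elementary real inequalities -/

lemma aux_sinh (s : ℝ) (hs : 0 ≤ s) : Real.sinh s ≤ s * Real.cosh s := by
  have h : MonotoneOn (fun x : ℝ => x * Real.cosh x - Real.sinh x) (Set.Ici 0) := by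
    apply monotoneOn_of_deriv_nonneg (convex_Ici 0)
    · fun_prop
    · fun_prop
    · intro x hx
      have hd : deriv (fun x : ℝ => x * Real.cosh x - Real.sinh x) x = x * Real.sinh x := by
        simp [mul_comm]
      rw [hd, interior_Ici] at *
      have hx0 : (0:ℝ) < x := hx
      exact mul_nonneg hx0.le (Real.sinh_nonneg_iff.2 hx0.le)
  have := h (Set.self_mem_Ici) (show s ∈ Set.Ici 0 from hs) hs
  simp at this
  linarith

lemma aux_tcos (t : ℝ) (h0 : 0 ≤ t) (h1 : t ≤ π) : t * Real.cos t ≤ Real.sin t := by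
  have h : MonotoneOn (fun x : ℝ => Real.sin x - x * Real.cos x) (Set.Icc 0 π) := by
    apply monotoneOn_of_deriv_nonneg (convex_Icc 0 π)
    · fun_prop
    · fun_prop
    · intro x hx
      have hd : deriv (fun x : ℝ => Real.sin x - x * Real.cos x) x = x * Real.sin x := by
        simp
      rw [hd, interior_Icc] at *
      exact mul_nonneg hx.1.le (Real.sin_nonneg_of_nonneg_of_le_pi hx.1.le hx.2.le)
  have := h (Set.left_mem_Icc.2 Real.pi_nonneg) (Set.mem_Icc.2 ⟨h0, h1⟩) h0
  simp at this
  linarith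

lemma aux_S (y : ℝ) (h0 : 0 < y) (h1 : y < π) :
    Real.sin y ^ 2 + y ^ 2 * Real.cos y < 2 * y * Real.sin y := by
  have h : StrictAntiOn (fun x : ℝ => Real.sin x ^ 2 + x ^ 2 * Real.cos x - 2 * x * Real.sin x)
      (Set.Icc 0 π) := by
    apply strictAntiOn_of_deriv_neg (convex_Icc 0 π)
    · fun_prop
    · intro x hx
      rw [interior_Icc] at hx
      have H : HasDerivAt (fun x : ℝ => Real.sin x ^ 2 + x ^ 2 * Real.cos x - 2 * x * Real.sin x)
          (Real.sin x * (2 * Real.cos x - 2 - x ^ 2)) x := by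
        have h1 := ((Real.hasDerivAt_sin x).pow 2)
        have h2 := (hasDerivAt_pow 2 x).mul (Real.hasDerivAt_cos x)
        have h3 := ((hasDerivAt_id x).const_mul (2:ℝ)).mul (Real.hasDerivAt_sin x)
        refine ((h1.add h2).sub h3).congr_deriv ?_
        simp
        ring
      rw [H.deriv]
      have hs : 0 < Real.sin x := Real.sin_pos_of_pos_of_lt_pi hx.1 hx.2
      have hneg : 2 * Real.cos x - 2 - x ^ 2 < 0 := by
        nlinarith [Real.cos_le_one x, sq_nonneg x, hx.1]
      exact mul_neg_of_pos_of_neg hs hneg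
  have := h (Set.left_mem_Icc.2 Real.pi_nonneg) (Set.mem_Icc.2 ⟨h0.le, h1.le⟩) h0
  simp at this
  linarith

lemma aux_Q (x y : ℝ) (h0 : 0 < y) (h1 : y < π) (h : Real.exp (-x) * Real.sin y = y) :
    x + Real.exp (-x) * Real.cos y < 1 := by
  set c := Real.exp (-x) with hc
  have hcpos : 0 < c := Real.exp_pos _
  have hsy : 0 < Real.sin y := Real.sin_pos_of_pos_of_lt_pi h0 h1
  have hx : x = - Real.log c := by rw [hc, Real.log_exp]; ring
  have hlog' : - Real.log c ≤ 1/c - 1 := by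
    have h2 := Real.log_le_sub_one_of_pos (show (0:ℝ) < c⁻¹ by positivity)
    rw [Real.log_inv] at h2
    have : c⁻¹ = 1/c := (one_div c).symm
    linarith [h2, this.ge, this.le]
  have hS := aux_S y h0 h1
  have hy2 : 0 < y^2 := by positivity
  have e1 : c^2 * Real.sin y^2 = y^2 := by linear_combination (c*Real.sin y + y)*h
  have e2 : c^2 * (2*y*Real.sin y) = 2*c*y^2 := by linear_combination (2*y*c)*h
  have hc2 := mul_lt_mul_of_pos_left hS (show (0:ℝ) < c^2 by positivity)
  have hmain : 1 + c^2 * Real.cos y < 2 * c := by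
    have step : (1 + c^2*Real.cos y) * y^2 < (2*c) * y^2 := by nlinarith [hc2, e1, e2]
    exact lt_of_mul_lt_mul_right step (sq_nonneg y)
  have key : 1/c + c * Real.cos y < 2 := by
    have heq : 1/c + c * Real.cos y = (1 + c^2 * Real.cos y)/c := by
      field_simp
    rw [heq, div_lt_iff₀ hcpos]
    linarith
  linarith

/-! ### Core injectivity contradiction -/

lemma aux_core (s t σ τ : ℝ) (hs : 0 ≤ s) (ht : 0 < t) (hπ : t < π)
    (h1 : t < τ) (h2 : τ < 2*π - t)
    (hR : Real.sinh s * Real.cos t = Real.exp σ * (s * Real.cos τ - t * Real.sin τ))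
    (hI : Real.cosh s * Real.sin t = Real.exp σ * (s * Real.sin τ + t * Real.cos τ)) :
    False := by
  have hE : 0 < Real.exp σ := Real.exp_pos σ
  have hst : 0 < s^2 + t^2 := by positivity
  have hsint : 0 < Real.sin t := Real.sin_pos_of_pos_of_lt_pi ht hπ
  have hcoshpos : 0 < Real.cosh s := Real.cosh_pos s
  have hsinh0 : 0 ≤ Real.sinh s := Real.sinh_nonneg_iff.2 hs
  have c1 : t * (Real.sinh s * Real.cos t) ≤ s * (Real.cosh s * Real.sin t) := by
    have k1 := aux_tcos t ht.le hπ.le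
    have k2 := aux_sinh s hs
    nlinarith [mul_le_mul_of_nonneg_right k1 hsinh0,
      mul_le_mul_of_nonneg_left k2 hsint.le]
  have lin1 : s * (Real.cosh s * Real.sin t) - t * (Real.sinh s * Real.cos t)
      = Real.exp σ * (s^2 + t^2) * Real.sin τ := by
    linear_combination s * hI - t * hR
  have hsinτ : 0 ≤ Real.sin τ := by
    by_contra hcon
    push_neg at hcon
    have := mul_neg_of_pos_of_neg (mul_pos hE hst) hcon
    linarith
  have hexp2 : 1 + 2*s ≤ Real.exp (2*s) := by
    have := Real.add_one_le_exp (2*s); linarith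
  have hEs : Real.exp s * Real.exp (-s) = 1 := by
    rw [← Real.exp_add]; simp
  have hsinhe : Real.sinh s = (Real.exp s - Real.exp (-s))/2 := Real.sinh_eq s
  have hcoshe : Real.cosh s = (Real.exp s + Real.exp (-s))/2 := Real.cosh_eq s
  have hexpsq : Real.exp s * Real.exp s = Real.exp (2*s) := by
    rw [← Real.exp_add]; ring_nf
  have hsc : Real.sin t * Real.cos t ≤ t := by
    nlinarith [aux_tcos t ht.le hπ.le, Real.sin_lt ht, Real.sin_le_one t,
      Real.cos_le_one t, Real.neg_one_le_cos t, hsint]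
  have hFpos : 0 < Real.exp (-s) := Real.exp_pos _
  have hsin2 : Real.sin t ^2 + Real.cos t ^2 = 1 := Real.sin_sq_add_cos_sq t
  have hid : (s * Real.cos t - t * Real.sin t) * (Real.cosh s * Real.sin t)
      - (s * Real.sin t + t * Real.cos t) * (Real.sinh s * Real.cos t)
      = Real.exp (-s) * (s * (Real.sin t * Real.cos t)) - Real.exp (-s) * (t * Real.sin t^2)
        - t * Real.sinh s := by
    rw [hsinhe, hcoshe]
    linear_combination (t * (Real.exp (-s) - Real.exp s) / 2) * hsin2
  have hb1 : Real.exp (-s) * (s * (Real.sin t * Real.cos t)) ≤ Real.exp (-s) * (s * t) :=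
    mul_le_mul_of_nonneg_left (mul_le_mul_of_nonneg_left hsc hs) hFpos.le
  have hb2 : Real.exp (-s) * (s * t) ≤ t * Real.sinh s := by
    have hss : s ≤ Real.exp s * Real.sinh s := by
      rw [hsinhe]
      nlinarith [hexpsq, hEs, hexp2]
    have h3 : Real.exp (-s) * (s*t) ≤ Real.exp (-s) * (t * (Real.exp s * Real.sinh s)) := by
      apply mul_le_mul_of_nonneg_left _ hFpos.le
      nlinarith [mul_le_mul_of_nonneg_left hss ht.le]
    have h4 : Real.exp (-s) * (t * (Real.exp s * Real.sinh s)) = t * Real.sinh s := by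
      linear_combination (t * Real.sinh s) * hEs
    linarith
  have c2 : (s * Real.cos t - t * Real.sin t) * (Real.cosh s * Real.sin t)
      - (s * Real.sin t + t * Real.cos t) * (Real.sinh s * Real.cos t) ≤ 0 := by
    rw [hid]
    have hnn : 0 ≤ Real.exp (-s) * (t * Real.sin t^2) := by positivity
    linarith
  have lin2 : (s * Real.cos t - t * Real.sin t) * (Real.cosh s * Real.sin t)
      - (s * Real.sin t + t * Real.cos t) * (Real.sinh s * Real.cos t)
      = Real.exp σ * (s^2 + t^2) * (Real.sin τ * Real.cos t - Real.cos τ * Real.sin t) := by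
    linear_combination (s * Real.cos t - t * Real.sin t) * hI
      - (s * Real.sin t + t * Real.cos t) * hR
  have hsinτt : Real.sin (τ - t) ≤ 0 := by
    rw [Real.sin_sub]
    by_contra hcon
    push_neg at hcon
    have := mul_pos (mul_pos hE hst) hcon
    linarith
  have h3 : τ - t < π → False := by
    intro hlt
    have : 0 < Real.sin (τ - t) := Real.sin_pos_of_pos_of_lt_pi (by linarith) hlt
    linarith
  have h4 : π ≤ τ - t := by by_contra hh; exact h3 (by linarith)
  have h5 : 0 < Real.sin (τ - π) := by
    apply Real.sin_pos_of_pos_of_lt_pi <;> linarith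
  rw [Real.sin_sub_pi] at h5
  linarith

lemma aux_core2 (s t σ τ : ℝ) (ht : 0 < t)
    (hc1 : 0 < τ - t) (hc2 : τ + t < 2*π)
    (hR : Real.sinh s * Real.cos t = Real.exp σ * (s * Real.cos τ - t * Real.sin τ))
    (hI : Real.cosh s * Real.sin t = Real.exp σ * (s * Real.sin τ + t * Real.cos τ)) :
    False := by
  have hπ : t < π := by linarith
  rcases le_or_gt 0 s with hs | hs
  · exact aux_core s t σ τ hs ht hπ (by linarith) (by linarith) hR hI
  · have hcos : Real.cos (2*π - τ) = Real.cos τ := by rw [Real.cos_sub]; simp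
    have hsin : Real.sin (2*π - τ) = -Real.sin τ := by rw [Real.sin_sub]; simp
    apply aux_core (-s) t σ (2*π - τ) (by linarith) ht hπ (by linarith) (by linarith)
    · rw [Real.sinh_neg, hcos, hsin]; linarith [hR]
    · rw [Real.cosh_neg, hcos, hsin]; linarith [hI]

lemma aux_core3 (s t σ τ : ℝ) (ht : t ≠ 0)
    (hc1 : 0 < τ - t) (hc1' : τ - t < 2*π) (hc2 : 0 < τ + t) (hc2' : τ + t < 2*π)
    (hR : Real.sinh s * Real.cos t = Real.exp σ * (s * Real.cos τ - t * Real.sin τ))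
    (hI : Real.cosh s * Real.sin t = Real.exp σ * (s * Real.sin τ + t * Real.cos τ)) :
    False := by
  rcases ht.lt_or_gt with h | h
  · apply aux_core2 (-s) (-t) σ τ (by linarith) (by linarith) (by linarith)
    · rw [Real.sinh_neg, Real.cos_neg]; linarith [hR]
    · rw [Real.cosh_neg, Real.sin_neg]; linarith [hI]
  · exact aux_core2 s t σ τ h hc1 hc2' hR hI

lemma complex_to_real (d m : ℂ) (hkey : Complex.exp d - Complex.exp (-d) = 2*d*Complex.exp m) :
    Real.sinh d.re * Real.cos d.im
      = Real.exp m.re * (d.re * Real.cos m.im - d.im * Real.sin m.im) ∧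
    Real.cosh d.re * Real.sin d.im
      = Real.exp m.re * (d.re * Real.sin m.im + d.im * Real.cos m.im) := by
  have hRe := congrArg Complex.re hkey
  have hIm := congrArg Complex.im hkey
  simp only [Complex.sub_re, Complex.sub_im, Complex.mul_re, Complex.mul_im,
    Complex.exp_re, Complex.exp_im, Complex.neg_re, Complex.neg_im,
    Real.cos_neg, Real.sin_neg, Complex.re_ofNat, Complex.im_ofNat] at hRe hIm
  constructor
  · rw [Real.sinh_eq]; linear_combination hRe / 2
  · rw [Real.cosh_eq]; linear_combination hIm / 2

lemma inj_strip : Set.InjOn (fun z : ℂ => Complex.exp (-z) + z)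
    {z : ℂ | 0 < z.im ∧ z.im < 2 * Real.pi} := by
  rintro a ⟨ha1, ha2⟩ b ⟨hb1, hb2⟩ h
  simp only at h
  by_contra hne
  have hdne : (b - a)/2 ≠ 0 := by
    intro hc
    apply hne
    have h2 : b - a = 0 := by
      rcases div_eq_zero_iff.mp hc with h2 | h2
      · exact h2
      · norm_num at h2
    exact (sub_eq_zero.mp h2).symm
  have e1 : Complex.exp ((b - a)/2) = Complex.exp (-a) * Complex.exp ((a + b)/2) := by
    rw [← Complex.exp_add]; congr 1; ring
  have e2 : Complex.exp (-((b - a)/2)) = Complex.exp (-b) * Complex.exp ((a + b)/2) := by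
    rw [← Complex.exp_add]; congr 1; ring
  have h1 : Complex.exp (-a) - Complex.exp (-b) = b - a := by linear_combination h
  have hkey : Complex.exp ((b - a)/2) - Complex.exp (-((b - a)/2))
      = 2*((b - a)/2)*Complex.exp ((a + b)/2) := by
    rw [e1, e2]
    linear_combination Complex.exp ((a + b)/2) * h1
  obtain ⟨hR, hI⟩ := complex_to_real ((b - a)/2) ((a + b)/2) hkey
  set s := ((b - a)/2).re with hs
  set t := ((b - a)/2).im with ht
  set σ := ((a + b)/2).re with hσ
  set τ := ((a + b)/2).im with hτ
  have hta : a.im = τ - t := by rw [hτ, ht]; simp [Complex.div_im]; ring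
  have htb : b.im = τ + t := by rw [hτ, ht]; simp [Complex.div_im]; ring
  have htne : t ≠ 0 := by
    intro h0
    have hsne : s ≠ 0 := by
      intro hs0
      apply hdne
      rw [Complex.ext_iff]
      simp [← hs, ← ht, hs0, h0]
    rw [h0] at hR hI hta
    simp only [Real.sin_zero, Real.cos_zero, mul_zero, mul_one, zero_mul] at hR hI
    have hsinτ : Real.sin τ = 0 := by
      have hIe : Real.exp σ * (s * Real.sin τ + 0) = 0 := by linarith [hI]
      rcases mul_eq_zero.mp hIe with h2 | h2
      · exact absurd h2 (Real.exp_ne_zero σ)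
      · have h3 : s * Real.sin τ = 0 := by linarith
        rcases mul_eq_zero.mp h3 with h4 | h4
        · exact absurd h4 hsne
        · exact h4
    have hτπ : τ = π := by
      have h1' : Real.sin (τ - π) = 0 := by rw [Real.sin_sub_pi, hsinτ]; ring
      have h2 : τ - π = 0 := by
        have := Real.sin_eq_zero_iff_of_lt_of_lt
          (show -π < τ - π by rw [hta] at ha1; linarith)
          (show τ - π < π by rw [hta] at ha2; linarith)
        exact this.1 h1'
      linarith
    rw [hτπ] at hR
    simp [Real.cos_pi] at hR
    have hstarted : Real.sinh s * s > 0 := by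
      rcases hsne.lt_or_gt with hlt | hlt
      · have := Real.sinh_neg_iff.2 hlt
        nlinarith
      · have := Real.sinh_pos_iff.2 hlt
        nlinarith
    have hs2 : 0 < s^2 := by positivity
    have hRs : Real.sinh s * s = -(Real.exp σ * s * s) := by rw [hR]; ring
    nlinarith [mul_pos (Real.exp_pos σ) hs2, hstarted, hRs]
  exact aux_core3 s t σ τ htne (by rw [hta] at ha1; linarith) (by rw [hta] at ha2; linarith)
    (by rw [htb] at hb1; linarith) (by rw [htb] at hb2; linarith) hR hI

/-! ### Points of the strip avoid the slits -/

lemma notin0 (x y : ℝ) (h0 : 0 < y) (h2 : y < 2*π)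
    (him : y - Real.exp (-x) * Real.sin y = 0) : x + Real.exp (-x) * Real.cos y < 1 := by
  have hcpos : 0 < Real.exp (-x) := Real.exp_pos _
  have hsy : 0 < Real.sin y := by nlinarith
  have hyπ : y < π := by
    by_contra hcon
    push_neg at hcon
    have h3 : Real.sin (y - π) ≥ 0 := by
      apply Real.sin_nonneg_of_nonneg_of_le_pi <;> linarith
    rw [Real.sin_sub_pi] at h3
    linarith
  exact aux_Q x y h0 hyπ (by linarith)

lemma notin2pi (x y : ℝ) (h0 : 0 < y) (h2 : y < 2*π)
    (him : y - Real.exp (-x) * Real.sin y = 2*π) : x + Real.exp (-x) * Real.cos y < 1 := by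
  have hcpos : 0 < Real.exp (-x) := Real.exp_pos _
  have hsy : Real.sin y < 0 := by nlinarith
  have hyπ : π < y := by
    by_contra hcon
    push_neg at hcon
    have h3 : Real.sin y ≥ 0 := Real.sin_nonneg_of_nonneg_of_le_pi h0.le hcon
    linarith
  have hsin' : Real.sin (2*π - y) = -Real.sin y := by
    rw [Real.sin_sub]; simp
  have hcos' : Real.cos (2*π - y) = Real.cos y := by
    rw [Real.cos_sub]; simp
  have := aux_Q x (2*π - y) (by linarith) (by linarith)
    (by rw [hsin']; linarith)
  rwa [hcos'] at this

/-! ### Surjectivity machinery -/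

noncomputable def gA (v y : ℝ) : ℝ :=
  Real.log (Real.sin y / (y - v)) + (y - v) * (Real.cos y / Real.sin y)

lemma gA_cont (v : ℝ) : ContinuousOn (gA v) (Set.Ioo (max v 0) π) := by
  have hsin : ∀ y ∈ Set.Ioo (max v 0) π, Real.sin y ≠ 0 := by
    intro y hy
    have : 0 < Real.sin y := Real.sin_pos_of_pos_of_lt_pi
      (lt_of_le_of_lt (le_max_right v 0) hy.1) hy.2
    exact this.ne'
  have hyv : ∀ y ∈ Set.Ioo (max v 0) π, y - v ≠ 0 := by
    intro y hy
    have : v < y := lt_of_le_of_lt (le_max_left v 0) hy.1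
    exact sub_ne_zero.2 this.ne'
  apply ContinuousOn.add
  · apply ContinuousOn.log
    · exact Real.continuous_sin.continuousOn.div
        ((continuous_id.sub continuous_const).continuousOn) hyv
    · intro y hy
      have h1 : 0 < Real.sin y := Real.sin_pos_of_pos_of_lt_pi
        (lt_of_le_of_lt (le_max_right v 0) hy.1) hy.2
      have h2 : 0 < y - v := sub_pos.2 (lt_of_le_of_lt (le_max_left v 0) hy.1)
      positivity
  · exact ((continuous_id.sub continuous_const).continuousOn).mul
      (Real.continuous_cos.continuousOn.div Real.continuous_sin.continuousOn hsin)

lemma sin_tendsto_pi : Tendsto Real.sin (𝓝[<] π) (𝓝[>] 0) := by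
  apply tendsto_nhdsWithin_of_tendsto_nhds_of_eventually_within
  · have := Real.continuous_sin.tendsto π
    rw [Real.sin_pi] at this
    exact this.mono_left nhdsWithin_le_nhds
  · filter_upwards [Ioo_mem_nhdsLT_of_mem (show π ∈ Set.Ioc (π/2) π from
      ⟨by linarith [Real.pi_pos], le_refl π⟩)] with y hy
    exact Real.sin_pos_of_pos_of_lt_pi (by linarith [Real.pi_pos, hy.1]) hy.2

lemma tendR (v : ℝ) (hv : v < π) : Tendsto (gA v) (𝓝[<] π) atBot := by
  have hsin := sin_tendsto_pi
  have h1 : Tendsto (fun y => Real.sin y / (y - v)) (𝓝[<] π) (𝓝[>] 0) := by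
    apply tendsto_nhdsWithin_of_tendsto_nhds_of_eventually_within
    · have hnum : Tendsto Real.sin (𝓝 π) (𝓝 0) := by
        have := Real.continuous_sin.tendsto π; rwa [Real.sin_pi] at this
      have hden : Tendsto (fun y : ℝ => y - v) (𝓝 π) (𝓝 (π - v)) :=
        (continuous_id.sub continuous_const).tendsto π
      have := hnum.div hden (show π - v ≠ 0 from (by linarith : (0:ℝ) < π - v).ne')
      simp only [zero_div] at this
      exact this.mono_left nhdsWithin_le_nhds
    · filter_upwards [Ioo_mem_nhdsLT_of_mem (show π ∈ Set.Ioc (max v (π/2)) π from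
        ⟨max_lt hv (by linarith [Real.pi_pos]), le_refl π⟩)] with y hy
      have h2 : 0 < Real.sin y := Real.sin_pos_of_pos_of_lt_pi
        (by have := lt_of_le_of_lt (le_max_right v (π/2)) hy.1; linarith [Real.pi_pos]) hy.2
      have h3 : 0 < y - v := sub_pos.2 (lt_of_le_of_lt (le_max_left v (π/2)) hy.1)
      show 0 < Real.sin y / (y - v)
      positivity
  have t1 : Tendsto (fun y => Real.log (Real.sin y / (y - v))) (𝓝[<] π) atBot :=
    Real.tendsto_log_nhdsGT_zero.comp h1
  have t2 : Tendsto (fun y => (y - v) * (Real.cos y / Real.sin y)) (𝓝[<] π) atBot := by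
    have hf : Tendsto (fun y => (y - v) * Real.cos y) (𝓝[<] π) (𝓝 (-(π - v))) := by
      have : Tendsto (fun y => (y - v) * Real.cos y) (𝓝 π) (𝓝 ((π - v) * Real.cos π)) :=
        ((continuous_id.sub continuous_const).mul Real.continuous_cos).tendsto π
      rw [Real.cos_pi] at this
      simpa using this.mono_left nhdsWithin_le_nhds
    have hg : Tendsto (fun y => (Real.sin y)⁻¹) (𝓝[<] π) atTop :=
      tendsto_inv_nhdsGT_zero.comp hsin
    have := hf.neg_mul_atTop (by linarith : -(π - v) < 0) hg
    refine this.congr (fun y => by ring)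
  exact Tendsto.atBot_add_atBot t1 t2

lemma tendL_pos (v : ℝ) (hv0 : 0 < v) (hvπ : v < π) :
    Tendsto (gA v) (𝓝[>] v) atTop := by
  have hsv : 0 < Real.sin v := Real.sin_pos_of_pos_of_lt_pi hv0 hvπ
  have hsub : Tendsto (fun y : ℝ => y - v) (𝓝[>] v) (𝓝[>] 0) := by
    apply tendsto_nhdsWithin_of_tendsto_nhds_of_eventually_within
    · have : Tendsto (fun y : ℝ => y - v) (𝓝 v) (𝓝 (v - v)) :=
        Tendsto.sub tendsto_id tendsto_const_nhds
      simpa using this.mono_left nhdsWithin_le_nhds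
    · filter_upwards [eventually_mem_nhdsWithin] with y hy
      exact sub_pos.2 (show v < y from hy)
  have h1 : Tendsto (fun y => Real.sin y / (y - v)) (𝓝[>] v) atTop := by
    have hnum : Tendsto Real.sin (𝓝[>] v) (𝓝 (Real.sin v)) :=
      (Real.continuous_sin.tendsto v).mono_left nhdsWithin_le_nhds
    have hg : Tendsto (fun y : ℝ => (y - v)⁻¹) (𝓝[>] v) atTop :=
      tendsto_inv_nhdsGT_zero.comp hsub
    have := hnum.pos_mul_atTop hsv hg
    exact this.congr (fun y => by rw [div_eq_mul_inv])
  have t1 : Tendsto (fun y => Real.log (Real.sin y / (y - v))) (𝓝[>] v) atTop :=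
    Real.tendsto_log_atTop.comp h1
  have t2 : Tendsto (fun y => (y - v) * (Real.cos y / Real.sin y)) (𝓝[>] v) (𝓝 0) := by
    have : Tendsto (fun y => (y - v) * (Real.cos y / Real.sin y)) (𝓝 v)
        (𝓝 ((v - v) * (Real.cos v / Real.sin v))) := by
      apply Tendsto.mul ((continuous_id.sub continuous_const).tendsto v)
      exact (Real.continuous_cos.tendsto v).div (Real.continuous_sin.tendsto v) hsv.ne'
    simpa using this.mono_left nhdsWithin_le_nhds
  have t2' : ∀ᶠ y in 𝓝[>] v, -1 ≤ (y - v) * (Real.cos y / Real.sin y) :=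
    t2.eventually (eventually_ge_nhds (by norm_num))
  apply tendsto_atTop_mono' _ _ (tendsto_atTop_add_const_right _ (-1) t1)
  filter_upwards [t2'] with y hy
  simp only [gA]
  linarith

lemma rlogr : Tendsto (fun r : ℝ => r * Real.log r) (𝓝[>] 0) (𝓝 0) := by
  have := tendsto_log_mul_rpow_nhdsGT_zero zero_lt_one
  simp only [Real.rpow_one] at this
  exact this.congr (fun r => mul_comm _ _)

lemma tendL_neg (v : ℝ) (hv : v < 0) : Tendsto (gA v) (𝓝[>] 0) atTop := by
  have hK : 0 < -v * Real.cos 1 := by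
    have : 0 < Real.cos 1 := Real.cos_pos_of_mem_Ioo
      (by constructor <;> nlinarith [Real.pi_gt_three])
    nlinarith
  set K := -v * Real.cos 1 with hKdef
  have ψ : Tendsto (fun r : ℝ => Real.log r + K / r) (𝓝[>] 0) atTop := by
    have base : Tendsto (fun r : ℝ => (K + r * Real.log r) * r⁻¹) (𝓝[>] 0) atTop := by
      apply Filter.Tendsto.pos_mul_atTop hK
      · simpa using (tendsto_const_nhds (x := K)).add rlogr
      · exact tendsto_inv_nhdsGT_zero
    apply base.congr'
    filter_upwards [eventually_mem_nhdsWithin] with r (hr : 0 < r)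
    field_simp
    ring
  have hsin0 : Tendsto Real.sin (𝓝[>] 0) (𝓝[>] 0) := by
    apply tendsto_nhdsWithin_of_tendsto_nhds_of_eventually_within
    · have := Real.continuous_sin.tendsto 0
      simpa using this.mono_left nhdsWithin_le_nhds
    · filter_upwards [Ioo_mem_nhdsGT_of_mem (show (0:ℝ) ∈ Set.Ico 0 π from
        ⟨le_refl 0, Real.pi_pos⟩)] with y hy
      exact Real.sin_pos_of_pos_of_lt_pi hy.1 hy.2
  have φt : Tendsto (fun y => Real.log (Real.sin y) + K / Real.sin y) (𝓝[>] 0) atTop :=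
    ψ.comp hsin0
  have φt' : Tendsto (fun y => Real.log (Real.sin y) + K / Real.sin y - Real.log (1 - v))
      (𝓝[>] 0) atTop := tendsto_atTop_add_const_right _ _ φt
  apply tendsto_atTop_mono' _ _ φt'
  filter_upwards [Ioo_mem_nhdsGT_of_mem (show (0:ℝ) ∈ Set.Ico 0 1 by norm_num)] with y hy
  have hy0 : 0 < y := hy.1
  have hy1 : y < 1 := hy.2
  have hyπ : y < π := lt_trans hy1 (by linarith [Real.pi_gt_three])
  have hs : 0 < Real.sin y := Real.sin_pos_of_pos_of_lt_pi hy0 hyπ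
  have hyv : 0 < y - v := by linarith
  have hcos : Real.cos 1 ≤ Real.cos y :=
    Real.cos_le_cos_of_nonneg_of_le_pi hy0.le (by linarith [Real.pi_gt_three]) hy1.le
  have hcos0 : 0 < Real.cos 1 := by nlinarith [hK, hv]
  simp only [gA]
  have e1 : Real.log (Real.sin y / (y - v)) = Real.log (Real.sin y) - Real.log (y - v) :=
    Real.log_div hs.ne' hyv.ne'
  rw [e1]
  have b1 : Real.log (y - v) ≤ Real.log (1 - v) :=
    Real.log_le_log (by linarith) (by linarith)
  have b2 : K / Real.sin y ≤ (y - v) * (Real.cos y / Real.sin y) := by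
    have e2 : (y - v) * (Real.cos y / Real.sin y) = ((y - v) * Real.cos y) / Real.sin y := by
      ring
    rw [e2]
    have hKle : K ≤ (y - v) * Real.cos y := by
      rw [hKdef]
      apply mul_le_mul (by linarith) hcos hcos0.le (by linarith)
    gcongr
  linarith

lemma q_tendsto : Tendsto (fun y : ℝ => Real.sin y / y) (𝓝[>] 0) (𝓝 1) := by
  have h := Real.hasDerivAt_sin 0
  rw [hasDerivAt_iff_tendsto_slope] at h
  rw [Real.cos_zero] at h
  have h2 : Tendsto (slope Real.sin 0) (𝓝[>] 0) (𝓝 1) :=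
    h.mono_left (nhdsWithin_mono _ (fun y hy => ne_of_gt hy))
  apply h2.congr'
  filter_upwards [eventually_mem_nhdsWithin] with y (hy : 0 < y)
  simp [slope_def_field, Real.sin_zero]

lemma tendL_zero : Tendsto (gA 0) (𝓝[>] 0) (𝓝 1) := by
  have hq := q_tendsto
  have t1 : Tendsto (fun y => Real.log (Real.sin y / y)) (𝓝[>] 0) (𝓝 0) := by
    have := (Real.continuousAt_log one_ne_zero).tendsto.comp hq
    simpa [Function.comp_def] using this
  have t2 : Tendsto (fun y => Real.cos y / (Real.sin y / y)) (𝓝[>] 0) (𝓝 1) := by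
    have hcos : Tendsto Real.cos (𝓝[>] 0) (𝓝 1) := by
      have := Real.continuous_cos.tendsto 0
      rw [Real.cos_zero] at this
      exact this.mono_left nhdsWithin_le_nhds
    have := hcos.div hq one_ne_zero
    simpa [Pi.div_def] using this
  have sum := t1.add t2
  rw [show (0:ℝ) + 1 = 1 by norm_num] at sum
  apply sum.congr'
  filter_upwards [Ioo_mem_nhdsGT_of_mem (show (0:ℝ) ∈ Set.Ico 0 π from ⟨le_refl 0, Real.pi_pos⟩)]
    with y hy
  have hy0 : 0 < y := hy.1
  have hs : 0 < Real.sin y := Real.sin_pos_of_pos_of_lt_pi hy.1 hy.2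
  simp only [gA, sub_zero]
  congr 1
  field_simp

lemma exists_y (u v : ℝ) (hvπ : v < π) (hv0 : v = 0 → u < 1) :
    ∃ y, y ∈ Set.Ioo (max v 0) π ∧ gA v y = u := by
  have ha : max v 0 < π := max_lt hvπ Real.pi_pos
  have hIooR : Set.Ioo (max v 0) π ∈ 𝓝[<] π :=
    Ioo_mem_nhdsLT_of_mem ⟨ha, le_refl π⟩
  have hR := (tendR v hvπ).eventually (eventually_lt_atBot u)
  obtain ⟨y₂, hy₂u, hy₂mem⟩ := (hR.and (eventually_mem_set.2 hIooR)).exists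
  -- left witness
  have hleft : ∃ y₁, y₁ ∈ Set.Ioo (max v 0) π ∧ u ≤ gA v y₁ := by
    rcases lt_trichotomy v 0 with hv | hv | hv
    · have hmax : max v 0 = 0 := max_eq_right hv.le
      have hIooL : Set.Ioo (max v 0) π ∈ 𝓝[>] (0:ℝ) := by
        rw [hmax]
        exact Ioo_mem_nhdsGT_of_mem ⟨le_refl 0, Real.pi_pos⟩
      have hT := (tendL_neg v hv).eventually (eventually_ge_atTop u)
      obtain ⟨y₁, h1, h2⟩ := (hT.and (eventually_mem_set.2 hIooL)).exists
      exact ⟨y₁, h2, h1⟩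
    · subst hv
      have hu1 : u < 1 := hv0 rfl
      have hmax : max (0:ℝ) 0 = 0 := max_self 0
      have hIooL : Set.Ioo (max (0:ℝ) 0) π ∈ 𝓝[>] (0:ℝ) := by
        rw [hmax]
        exact Ioo_mem_nhdsGT_of_mem ⟨le_refl 0, Real.pi_pos⟩
      have hT := tendL_zero.eventually (eventually_ge_nhds hu1)
      obtain ⟨y₁, h1, h2⟩ := (hT.and (eventually_mem_set.2 hIooL)).exists
      exact ⟨y₁, h2, h1⟩
    · have hmax : max v 0 = v := max_eq_left hv.le
      have hIooL : Set.Ioo (max v 0) π ∈ 𝓝[>] v := by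
        rw [hmax]
        exact Ioo_mem_nhdsGT_of_mem ⟨le_refl v, hvπ⟩
      have hT := (tendL_pos v hv hvπ).eventually (eventually_ge_atTop u)
      obtain ⟨y₁, h1, h2⟩ := (hT.and (eventually_mem_set.2 hIooL)).exists
      exact ⟨y₁, h2, h1⟩
  obtain ⟨y₁, hy₁mem, hy₁u⟩ := hleft
  -- IVT
  have hsubset : Set.uIcc y₁ y₂ ⊆ Set.Ioo (max v 0) π :=
    (Set.ordConnected_Ioo).uIcc_subset hy₁mem hy₂mem
  have hcont : ContinuousOn (gA v) (Set.uIcc y₁ y₂) := (gA_cont v).mono hsubset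
  have humem : u ∈ Set.uIcc (gA v y₁) (gA v y₂) := by
    rcases le_total (gA v y₁) (gA v y₂) with hle | hle
    · rw [Set.uIcc_of_le hle]; exact ⟨by linarith, by linarith⟩
    · rw [Set.uIcc_of_ge hle]; exact ⟨hy₂u.le, hy₁u⟩
  obtain ⟨y, hy, hgy⟩ := intermediate_value_uIcc hcont humem
  exact ⟨y, hsubset hy, hgy⟩

lemma build (u v y : ℝ) (hy0 : 0 < y) (hyπ : y < π) (hyv : v < y)
    (hg : gA v y = u) :
    ∃ z : ℂ, (0 < z.im ∧ z.im < 2*π) ∧ (Complex.exp (-z) + z).re = u ∧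
      (Complex.exp (-z) + z).im = v := by
  have hs : 0 < Real.sin y := Real.sin_pos_of_pos_of_lt_pi hy0 hyπ
  have hyv' : 0 < y - v := sub_pos.2 hyv
  set x := Real.log (Real.sin y / (y - v)) with hx
  have hexp : Real.exp (-x) = (y - v) / Real.sin y := by
    rw [hx, Real.exp_neg, Real.exp_log (by positivity), inv_div]
  refine ⟨(x : ℂ) + (y : ℂ) * Complex.I, ⟨by simpa using hy0, by simp; linarith [Real.pi_pos]⟩, ?_, ?_⟩
  all_goals
    simp only [Complex.add_re, Complex.add_im, Complex.exp_re, Complex.exp_im,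
      Complex.neg_re, Complex.neg_im, Complex.ofReal_re, Complex.ofReal_im,
      Complex.mul_re, Complex.mul_im, Complex.I_re, Complex.I_im,
      Real.cos_neg, Real.sin_neg, mul_zero, mul_one, zero_mul, sub_zero, zero_add, add_zero,
      zero_sub, neg_zero]
  · rw [hexp, ← hg]
    simp only [gA, ← hx]
    field_simp
    ring
  · rw [hexp]
    field_simp
    ring

lemma fre (z : ℂ) : (Complex.exp (-z) + z).re = z.re + Real.exp (-z.re) * Real.cos z.im := by
  simp only [Complex.add_re, Complex.exp_re, Complex.neg_re, Complex.neg_im, Real.cos_neg]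
  ring

lemma fim (z : ℂ) : (Complex.exp (-z) + z).im = z.im - Real.exp (-z.re) * Real.sin z.im := by
  simp only [Complex.add_im, Complex.exp_im, Complex.neg_re, Complex.neg_im, Real.sin_neg]
  ring

lemma surj_lt (w : ℂ) (hvπ : w.im < π) (hv0 : w.im = 0 → w.re < 1) :
    ∃ z : ℂ, (0 < z.im ∧ z.im < 2*π) ∧ Complex.exp (-z) + z = w := by
  obtain ⟨y, hymem, hgy⟩ := exists_y w.re w.im hvπ hv0
  obtain ⟨z, hz, hre, him⟩ := build w.re w.im y
    (lt_of_le_of_lt (le_max_right _ 0) hymem.1) hymem.2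
    (lt_of_le_of_lt (le_max_left _ 0) hymem.1) hgy
  exact ⟨z, hz, Complex.ext hre him⟩

lemma surj_pi (w : ℂ) (hw : w.im = π) :
    ∃ z : ℂ, (0 < z.im ∧ z.im < 2*π) ∧ Complex.exp (-z) + z = w := by
  set u := w.re with hu
  set a := (u+1)/2 with hadef
  set b := max 1 (u+1) with hbdef
  have hab : a ≤ b := by
    rcases le_total (u+1) 1 with h | h
    · have : a ≤ 1 := by rw [hadef]; linarith
      exact le_trans this (le_max_left _ _)
    · have : a ≤ u + 1 := by rw [hadef]; linarith
      exact le_trans this (le_max_right _ _)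
  have hcont : ContinuousOn (fun x : ℝ => x - Real.exp (-x)) (Set.Icc a b) := by fun_prop
  have hha : a - Real.exp (-a) ≤ u := by
    have := Real.add_one_le_exp (-a)
    have h2 : 1 - a ≤ Real.exp (-a) := by linarith
    rw [hadef] at *
    linarith
  have hhb : u ≤ b - Real.exp (-b) := by
    have hb1 : 1 ≤ b := le_max_left _ _
    have hbu : u + 1 ≤ b := le_max_right _ _
    have : Real.exp (-b) ≤ 1 := Real.exp_le_one_iff.2 (by linarith)
    linarith
  obtain ⟨x, _, hx⟩ := intermediate_value_Icc hab hcont ⟨hha, hhb⟩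
  have hx' : x - Real.exp (-x) = u := hx
  set z : ℂ := (x : ℂ) + (π : ℝ) * Complex.I with hz
  have hzre : z.re = x := by simp [hz]
  have hzim : z.im = π := by simp [hz]
  refine ⟨z, ⟨by rw [hzim]; exact Real.pi_pos, by rw [hzim]; linarith [Real.pi_pos]⟩, ?_⟩
  apply Complex.ext
  · rw [fre, hzre, hzim, Real.cos_pi, ← hu]
    linarith [hx']
  · rw [fim, hzre, hzim, Real.sin_pi, hw]
    ring

lemma reflect (z : ℂ) :
    Complex.exp (-((starRingEnd ℂ) z + 2*(π:ℝ)*Complex.I)) + ((starRingEnd ℂ) z + 2*(π:ℝ)*Complex.I)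
      = (starRingEnd ℂ) (Complex.exp (-z) + z) + 2*(π:ℝ)*Complex.I := by
  have h1 : Complex.exp (-((starRingEnd ℂ) z + 2*(π:ℝ)*Complex.I))
      = Complex.exp (-(starRingEnd ℂ) z) * Complex.exp (-(2*(π:ℝ)*Complex.I)) := by
    rw [← Complex.exp_add]; congr 1; ring
  have h2 : Complex.exp (-(2*(π:ℝ)*Complex.I)) = 1 := by
    rw [Complex.exp_neg]
    rw [show ((2:ℂ)*(π:ℝ)*Complex.I) = 2*(π:ℝ)*Complex.I by ring]
    rw [Complex.exp_two_pi_mul_I]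
    simp
  have h3 : Complex.exp (-(starRingEnd ℂ) z) = (starRingEnd ℂ) (Complex.exp (-z)) := by
    rw [← map_neg, ← Complex.exp_conj]
  rw [h1, h2, h3, map_add]
  ring

lemma surj_all (w : ℂ) (h2π : ¬(w.im = 2*π ∧ 1 ≤ w.re)) (h0 : ¬(w.im = 0 ∧ 1 ≤ w.re)) :
    ∃ z : ℂ, (0 < z.im ∧ z.im < 2*π) ∧ Complex.exp (-z) + z = w := by
  rcases lt_trichotomy w.im π with h | h | h
  · apply surj_lt w h
    intro him
    by_contra hcon
    push_neg at hcon
    exact h0 ⟨him, hcon⟩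
  · exact surj_pi w h
  · set w' : ℂ := (starRingEnd ℂ) w + 2*(π:ℝ)*Complex.I with hw'
    have hw'im : w'.im = 2*π - w.im := by
      rw [hw']
      simp [Complex.add_im, Complex.conj_im]
      ring
    have hw're : w'.re = w.re := by
      rw [hw']
      simp [Complex.add_re, Complex.conj_re]
    obtain ⟨z', hz', hfz'⟩ := surj_lt w' (by rw [hw'im]; linarith)
      (by
        intro him
        rw [hw'im] at him
        have hwim : w.im = 2*π := by linarith
        by_contra hcon
        push_neg at hcon
        rw [hw're] at hcon
        exact h2π ⟨hwim, hcon⟩)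
    refine ⟨(starRingEnd ℂ) z' + 2*(π:ℝ)*Complex.I, ⟨?_, ?_⟩, ?_⟩
    · simp [Complex.add_im, Complex.conj_im]
      linarith [hz'.2]
    · simp [Complex.add_im, Complex.conj_im]
      linarith [hz'.1]
    · rw [reflect, hfz', hw']
      rw [map_add]
      simp only [Complex.conj_conj]
      have : (starRingEnd ℂ) (2*(π:ℝ)*Complex.I) = -(2*(π:ℝ)*Complex.I) := by
        simp [map_mul, Complex.conj_I, map_ofNat, Complex.conj_ofReal]
      rw [this]
      ring

end ExpNegAddId

open Real

/-- The entire function `f(z) = e^{−z} + z` is injective on the strip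
`S = {0 < Im z < 2π}` and maps it onto the plane minus the two closed half-lines
`{Im w = 0, Re w ≥ 1}` and `{Im w = 2π, Re w ≥ 1}`; i.e. `f` is a conformal map of `S`
onto this slit plane. -/
theorem exp_neg_add_id_conformal_on_strip :
    Set.InjOn (fun z : ℂ => Complex.exp (-z) + z)
      {z : ℂ | 0 < z.im ∧ z.im < 2 * Real.pi} ∧
    (fun z : ℂ => Complex.exp (-z) + z) '' {z : ℂ | 0 < z.im ∧ z.im < 2 * Real.pi} =
      Set.univ \ ({w : ℂ | w.im = 2 * Real.pi ∧ 1 ≤ w.re} ∪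
        {w : ℂ | w.im = 0 ∧ 1 ≤ w.re}) := by
  constructor
  · exact ExpNegAddId.inj_strip
  · ext w
    simp only [Set.mem_image, Set.mem_diff, Set.mem_univ, Set.mem_union, Set.mem_setOf_eq,
      true_and]
    constructor
    · rintro ⟨z, ⟨hz1, hz2⟩, rfl⟩
      have hre := ExpNegAddId.fre z
      have him := ExpNegAddId.fim z
      push_neg
      constructor
      · intro h2π
        rw [hre]
        rw [him] at h2π
        have := ExpNegAddId.notin2pi z.re z.im hz1 hz2 h2π
        linarith
      · intro h0
        rw [hre]
        rw [him] at h0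
        have := ExpNegAddId.notin0 z.re z.im hz1 hz2 h0
        linarith
    · intro h
      push_neg at h
      obtain ⟨h2π, h0⟩ := h
      have h2π' : ¬(w.im = 2*π ∧ 1 ≤ w.re) := by
        rintro ⟨ha, hb⟩
        exact absurd hb (not_le.2 (h2π ha))
      have h0' : ¬(w.im = 0 ∧ 1 ≤ w.re) := by
        rintro ⟨ha, hb⟩
        exact absurd hb (not_le.2 (h0 ha))
      obtain ⟨z, hz, hfz⟩ := ExpNegAddId.surj_all w h2π' h0'
      exact ⟨z, hz, hfz⟩
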